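/- Let ξ ∈ ℝ² with |ξ|²/2 ≤ |ξ₁| < |ξ|² (the region D₂), so that the eigenvalues are complex: λ± = (-|ξ|² ± i√(4ξ₁² - |ξ|⁴))/2. Then |M̂₁(ξ,t)| = |ξ₁ (e^{λ₋t} - e^{λ₊t})/(λ₊ - λ₋)| ≤ C e^{-|ξ|²t/4} for an absolute constant C and all t ≥ 0. -/

import Mathlib

open Complex Real

lemma aux_exp (x : ℝ) (hx : 0 ≤ x) : x * Real.exp (-x) ≤ Real.exp (-x/2) := by
  have h1 : 1 + x/4 ≤ Real.exp (x/4) := by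
    have := Real.add_one_le_exp (x/4); linarith
  have h2 : x ≤ Real.exp (x/2) := by
    have hsq : Real.exp (x/4) ^ 2 = Real.exp (x/2) := by
      rw [sq, ← Real.exp_add]; ring_nf
    nlinarith [Real.exp_pos (x/4), sq_nonneg (x/4 - 1)]
  have h3 : (0:ℝ) < Real.exp (-x) := Real.exp_pos _
  calc x * Real.exp (-x) ≤ Real.exp (x/2) * Real.exp (-x) := by nlinarith
    _ = Real.exp (-x/2) := by rw [← Real.exp_add]; ring_nf

theorem stmt4 :
    ∃ C > 0, ∀ ξ₁ ξ₂ t : ℝ, 0 ≤ t →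
      (ξ₁ ^ 2 + ξ₂ ^ 2) / 2 ≤ |ξ₁| → |ξ₁| < ξ₁ ^ 2 + ξ₂ ^ 2 →
      (let s : ℝ := ξ₁ ^ 2 + ξ₂ ^ 2
       let lamp : ℂ := (-(s : ℂ) + Complex.I * (Real.sqrt (4 * ξ₁ ^ 2 - s ^ 2) : ℂ)) / 2
       let lamm : ℂ := (-(s : ℂ) - Complex.I * (Real.sqrt (4 * ξ₁ ^ 2 - s ^ 2) : ℂ)) / 2
       ‖((ξ₁ : ℂ) * (Complex.exp (lamm * (t : ℂ)) - Complex.exp (lamp * (t : ℂ))) /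
            (lamp - lamm))‖
         ≤ C * Real.exp (-(s * t) / 4)) := by
  refine ⟨2, by norm_num, ?_⟩
  intro ξ₁ ξ₂ t ht h1 h2
  dsimp only
  set s : ℝ := ξ₁ ^ 2 + ξ₂ ^ 2 with hs
  have hs0 : 0 < s := lt_of_le_of_lt (abs_nonneg ξ₁) h2
  have hrnn : 0 ≤ 4 * ξ₁ ^ 2 - s ^ 2 := by nlinarith [abs_nonneg ξ₁, _root_.sq_abs ξ₁]
  set r : ℝ := Real.sqrt (4 * ξ₁ ^ 2 - s ^ 2) with hrdef
  have hr : 0 ≤ r := Real.sqrt_nonneg _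
  have hden : ((-(s:ℂ) + Complex.I * r) / 2) - ((-(s:ℂ) - Complex.I * r) / 2)
      = Complex.I * r := by ring
  rw [hden]
  rcases eq_or_lt_of_le hr with h0 | h0
  · rw [← h0]
    simp
    positivity
  · -- exponent rewrites
    have he1 : ((-(s:ℂ) - Complex.I * r) / 2) * t
        = (↑(-(s*t)/2) : ℂ) + (↑(-(r*t/2)) : ℂ) * Complex.I := by
      push_cast; ring
    have he2 : ((-(s:ℂ) + Complex.I * r) / 2) * t
        = (↑(-(s*t)/2) : ℂ) + (↑(r*t/2) : ℂ) * Complex.I := by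
      push_cast; ring
    have hdiff : Complex.exp (((-(s:ℂ) - Complex.I * r) / 2) * t)
        - Complex.exp (((-(s:ℂ) + Complex.I * r) / 2) * t)
        = Complex.exp (↑(-(s*t)/2)) * (↑(-2 * Real.sin (r*t/2)) * Complex.I) := by
      rw [he1, he2, Complex.exp_add, Complex.exp_add, Complex.exp_mul_I,
        Complex.exp_mul_I]
      simp only [← Complex.ofReal_sin, ← Complex.ofReal_cos, ← Complex.ofReal_neg,
        Real.cos_neg, Real.sin_neg]
      push_cast
      ring
    rw [hdiff]
    simp only [norm_div, norm_mul, Complex.norm_exp, Complex.norm_real, Real.norm_eq_abs, Complex.norm_I,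
      Complex.ofReal_re, mul_one, one_mul]
    rw [_root_.abs_of_nonneg hr, ← abs_mul]
    have hb : |(-2 : ℝ) * Real.sin (r * t / 2)| ≤ r * t := by
      rw [abs_mul]
      have := Real.abs_sin_le_abs (x := r * t / 2)
      rw [_root_.abs_of_nonneg (by positivity : (0:ℝ) ≤ r * t / 2)] at this
      rw [(by norm_num : |(-2:ℝ)| = 2)]
      linarith
    have hE : (0:ℝ) < Real.exp (-(s * t) / 2) := Real.exp_pos _
    have step1 : |ξ₁| * (Real.exp (-(s * t) / 2) * |(-2 : ℝ) * Real.sin (r * t / 2)|) / r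
        ≤ s * t * Real.exp (-(s * t) / 2) := by
      rw [div_le_iff₀ h0]
      have h3 : |ξ₁| * (Real.exp (-(s * t) / 2) * |(-2 : ℝ) * Real.sin (r * t / 2)|)
          ≤ |ξ₁| * (Real.exp (-(s * t) / 2) * (r * t)) := by
        have := abs_nonneg ξ₁
        gcongr
      refine h3.trans ?_
      have h4 : |ξ₁| ≤ s := le_of_lt h2
      have := abs_nonneg ξ₁
      nlinarith [mul_nonneg hr ht, hE.le, mul_nonneg (mul_nonneg (sub_nonneg.2 h4) (mul_nonneg hr ht)) hE.le]
    refine step1.trans ?_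
    have := aux_exp (s * t / 2) (by positivity)
    rw [(by ring : -(s * t / 2) = -(s * t) / 2),
      (by ring : -(s * t) / 2 / 2 = -(s * t) / 4)] at this
    nlinarith [hE.le]
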